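/- One-step natural policy gradient contraction for LQR: let K be stabilizing, K' = K − γ E_K with E_K = (R + B^T P_K B)K − B^T P_K A, and suppose γ ‖R + B^T P_K B‖ ≤ 1. Then J(K') − J(K*) ≤ (1 − γ σ_min(Ψ) σ_min(R) ‖Σ_{K*}‖^{-1}) (J(K) − J(K*)), where K* is the optimal policy. -/

import Mathlib

open Matrix
open scoped ENNReal NNReal

/-- Spectral radius of a real square matrix. -/
noncomputable def specRad {n : Type*} [Fintype n] [DecidableEq n]
    (M : Matrix n n ℝ) : ℝ≥0∞ :=
  ⨆ z ∈ spectrum ℂ (M.map (Complex.ofReal : ℝ → ℂ)), (‖z‖₊ : ℝ≥0∞)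

/-- The ℓ₂ → ℓ₂ operator norm of a real matrix. -/
noncomputable def opNorm {m n : Type*} [Fintype m] [Fintype n] [DecidableEq n]
    (M : Matrix m n ℝ) : ℝ :=
  ‖LinearMap.toContinuousLinearMap (Matrix.toEuclideanLin (𝕜 := ℝ) M)‖

/-- The minimal eigenvalue of a real matrix, as the infimum of its real spectrum. -/
noncomputable def minEig {n : Type*} [Fintype n] [DecidableEq n]
    (M : Matrix n n ℝ) : ℝ :=
  sInf (spectrum ℝ M)

namespace LQRAux

open Filter Topology

set_option linter.unusedSectionVars false

section norms
attribute [local instance] Matrix.linftyOpNormedRing Matrix.linftyOpNormedAlgebra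

variable {n : Type*} [Fintype n] [DecidableEq n]

lemma entry_le_linfty (A : Matrix n n ℂ) (i j : n) : ‖A i j‖₊ ≤ ‖A‖₊ := by
  rw [Matrix.linfty_opNNNorm_def]
  calc ‖A i j‖₊ ≤ ∑ j', ‖A i j'‖₊ :=
        Finset.single_le_sum (f := fun j => ‖A i j‖₊) (fun _ _ => zero_le) (Finset.mem_univ j)
    _ ≤ _ := Finset.le_sup (f := fun i => ∑ j', ‖A i j'‖₊) (Finset.mem_univ i)

lemma pow_entry_tendsto (M : Matrix n n ℝ) (h : specRad M < 1) (i j : n) :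
    Tendsto (fun m : ℕ => (M ^ m) i j) atTop (𝓝 0) := by
  set Mc : Matrix n n ℂ := (Complex.ofRealHom.mapMatrix M)
  have hsr : spectralRadius ℂ Mc < 1 := h
  obtain ⟨r, hr1, hr2⟩ := ENNReal.lt_iff_exists_nnreal_btwn.mp hsr
  have hg := spectrum.pow_nnnorm_pow_one_div_tendsto_nhds_spectralRadius Mc
  have hev : ∀ᶠ m : ℕ in atTop, (‖Mc ^ m‖₊ : ℝ≥0∞) ^ (1 / (m:ℝ)) < (r : ℝ≥0∞) :=
    hg.eventually_lt_const hr1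
  have hev2 : ∀ᶠ m : ℕ in atTop, |(M ^ m) i j| ≤ (r : ℝ) ^ m := by
    filter_upwards [hev, eventually_ge_atTop 1] with m hm hm1
    have hmn : (m : ℝ) ≠ 0 := by positivity
    have h2 : ((‖Mc ^ m‖₊ : ℝ≥0∞) ^ (1 / (m:ℝ))) ^ (m:ℝ) ≤ ((r : ℝ≥0∞)) ^ (m:ℝ) :=
      ENNReal.rpow_le_rpow hm.le (by positivity)
    rw [← ENNReal.rpow_mul, one_div, inv_mul_cancel₀ hmn, ENNReal.rpow_one,
      ENNReal.rpow_natCast, ← ENNReal.coe_pow] at h2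
    have h3 : ‖Mc ^ m‖ ≤ (r:ℝ) ^ m := by exact_mod_cast h2
    have h4 : ‖(Mc ^ m) i j‖ ≤ ‖Mc ^ m‖ := by
      exact_mod_cast entry_le_linfty (Mc ^ m) i j
    have h5 : (Mc ^ m) i j = ((M ^ m) i j : ℂ) := by
      rw [← map_pow]
      rfl
    rw [h5] at h4
    simpa using h4.trans h3
  refine squeeze_zero_norm' ?_ (tendsto_pow_atTop_nhds_zero_of_lt_one r.2 (by exact_mod_cast hr2))
  simpa using hev2

end norms

variable {n m : Type*} [Fintype n] [DecidableEq n] [Fintype m] [DecidableEq m]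

lemma psd_iff' (M : Matrix n n ℝ) :
    M.PosSemidef ↔ M.IsHermitian ∧ ∀ x : n → ℝ, 0 ≤ x ⬝ᵥ M.mulVec x := by
  simp only [Matrix.posSemidef_iff_dotProduct_mulVec, star_trivial]

lemma herm_iff_sym (M : Matrix n n ℝ) : M.IsHermitian ↔ Mᵀ = M := by
  rw [Matrix.IsHermitian, Matrix.conjTranspose_eq_transpose_of_trivial]

lemma lyap_psd (M X N : Matrix n n ℝ) (hXh : X.IsHermitian) (hNh : N.IsHermitian)
    (hX : X = Mᵀ * X * M + N) (hN : (-N).PosSemidef) (hM : specRad M < 1) :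
    (N - X).PosSemidef := by
  rw [psd_iff']
  refine ⟨hNh.sub hXh, fun x => ?_⟩
  have key : ∀ v : n → ℝ, v ⬝ᵥ X.mulVec v = (M *ᵥ v) ⬝ᵥ (X *ᵥ (M *ᵥ v)) + v ⬝ᵥ (N *ᵥ v) := by
    intro v
    conv_lhs => rw [hX]
    rw [Matrix.add_mulVec, dotProduct_add, ← Matrix.mulVec_mulVec, ← Matrix.mulVec_mulVec,
      Matrix.dotProduct_mulVec v Mᵀ, Matrix.vecMul_transpose]
  have hNle : ∀ v : n → ℝ, v ⬝ᵥ (N *ᵥ v) ≤ 0 := by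
    intro v
    have := (psd_iff' (-N)).mp hN |>.2 v
    simp only [Matrix.neg_mulVec, dotProduct_neg] at this
    linarith
  set v : ℕ → n → ℝ := fun m => (M ^ m) *ᵥ x with hv
  set g : ℕ → ℝ := fun m => (v m) ⬝ᵥ (X *ᵥ (v m)) with hg
  have hvsucc : ∀ m, v (m + 1) = M *ᵥ (v m) := by
    intro m; rw [hv]; simp only [pow_succ']
    rw [← Matrix.mulVec_mulVec]
  have hstep : ∀ m, g m = g (m + 1) + (v m) ⬝ᵥ (N *ᵥ (v m)) := by
    intro m; rw [hg]; simp only [hvsucc m]; exact key (v m)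
  have hmono : Monotone g :=
    monotone_nat_of_le_succ fun m => by have := hstep m; have := hNle (v m); linarith
  have hvt : Tendsto v atTop (𝓝 0) := by
    rw [tendsto_pi_nhds]
    intro i
    have : Tendsto (fun m : ℕ => ∑ j, (M ^ m) i j * x j) atTop (𝓝 (∑ j : n, 0 * x j)) :=
      tendsto_finset_sum _ fun j _ => (pow_entry_tendsto M hM i j).mul_const (x j)
    simpa [hv, Matrix.mulVec, dotProduct] using this
  have hcont : Continuous (fun w : n → ℝ => w ⬝ᵥ (X *ᵥ w)) := by
    simp only [dotProduct, Matrix.mulVec]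
    fun_prop
  have hgt : Tendsto g atTop (𝓝 0) := by
    have := (hcont.tendsto 0).comp hvt
    simpa [hg, Function.comp_def] using this
  have hg1 : g 1 ≤ 0 := ge_of_tendsto hgt (eventually_atTop.mpr ⟨1, fun m hm => hmono hm⟩)
  have hg0 : g 0 = g 1 + x ⬝ᵥ (N *ᵥ x) := by
    have := hstep 0
    simpa [hv] using this
  have hg0' : g 0 = x ⬝ᵥ (X *ᵥ x) := by simp [hg, hv]
  rw [Matrix.sub_mulVec, dotProduct_sub]
  linarith [hg0, hg0', hg1]

lemma spectrum_eq (M : Matrix n n ℝ) (hM : M.IsHermitian) :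
    spectrum ℝ M = Set.range hM.eigenvalues := hM.spectrum_real_eq_range_eigenvalues

lemma minEig_pos [Nonempty n] (M : Matrix n n ℝ) (hM : M.PosDef) : 0 < minEig M := by
  have hmem : minEig M ∈ spectrum ℝ M := by
    rw [minEig, spectrum_eq M hM.isHermitian]
    exact (Set.range_nonempty _).csInf_mem (Set.finite_range _)
  rw [spectrum_eq M hM.isHermitian] at hmem
  obtain ⟨i, hi⟩ := hmem
  rw [minEig, spectrum_eq M hM.isHermitian, ← hi] at *
  exact hi ▸ hM.eigenvalues_pos i

lemma sub_minEig_smul_psd [Nonempty n] (M : Matrix n n ℝ) (hM : M.IsHermitian) :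
    (M - minEig M • 1).PosSemidef := by
  have h1 : (M - minEig M • 1).IsHermitian := by
    rw [herm_iff_sym] at *
    simp [Matrix.transpose_smul, hM]
  apply h1.posSemidef_iff_eigenvalues_nonneg.mpr
  intro i
  have hmem : h1.eigenvalues i ∈ spectrum ℝ (M - minEig M • 1) :=
    h1.eigenvalues_mem_spectrum_real i
  have hshift := (spectrum.sub_singleton_eq (R := ℝ) M (minEig M)).symm
  rw [Algebra.algebraMap_eq_smul_one] at hshift
  rw [hshift, Set.sub_singleton] at hmem
  obtain ⟨x, hx, hxe⟩ := hmem
  have : minEig M ≤ x := csInf_le (by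
    rw [spectrum_eq M hM]; exact Set.Finite.bddBelow (Set.finite_range _)) hx
  simp only [Pi.zero_apply] at hxe ⊢
  linarith

lemma minEig_empty [IsEmpty n] (M : Matrix n n ℝ) : minEig M = 0 := by
  have : spectrum ℝ M = ∅ := by
    ext z
    simp [spectrum.mem_iff, isUnit_of_subsingleton]
  rw [minEig, this, Real.sInf_empty]

lemma dot_le_opNorm (S : Matrix n n ℝ) (x : n → ℝ) :
    x ⬝ᵥ S.mulVec x ≤ opNorm S * (x ⬝ᵥ x) := by
  set L := LinearMap.toContinuousLinearMap (Matrix.toEuclideanLin (𝕜 := ℝ) S) with hL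
  set x' : EuclideanSpace ℝ n := (WithLp.equiv 2 (n → ℝ)).symm x with hx'
  have h1 : x ⬝ᵥ S.mulVec x = inner (𝕜 := ℝ) x' (L x') := by
    rw [PiLp.inner_apply]
    simp only [hL, LinearMap.coe_toContinuousLinearMap', hx']
    simp [dotProduct, RCLike.inner_apply, mul_comm]
  have h2 : x ⬝ᵥ x = ‖x'‖ * ‖x'‖ := by
    rw [← real_inner_self_eq_norm_mul_norm, PiLp.inner_apply]
    simp [dotProduct, RCLike.inner_apply]
    simp [hx', sq]
  have h3 : inner (𝕜 := ℝ) x' (L x') ≤ ‖x'‖ * ‖L x'‖ := real_inner_le_norm _ _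
  have h4 : ‖L x'‖ ≤ ‖L‖ * ‖x'‖ := L.le_opNorm x'
  have h5 : opNorm S = ‖L‖ := by rw [opNorm, hL]
  rw [h1, h2, h5]
  nlinarith [norm_nonneg x', norm_nonneg (L x'), norm_nonneg L]

lemma opNorm_smul_one_sub_psd (S : Matrix n n ℝ) (hS : S.PosSemidef) :
    (opNorm S • 1 - S).PosSemidef := by
  rw [psd_iff']
  constructor
  · rw [herm_iff_sym]
    have := (herm_iff_sym S).mp hS.1
    simp [Matrix.transpose_smul, this]
  · intro x
    have h := dot_le_opNorm S x
    rw [Matrix.sub_mulVec, dotProduct_sub, smul_mulVec, Matrix.one_mulVec,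
      dotProduct_smul]
    simpa using h

lemma one_sub_smul_psd (F : Matrix n n ℝ) (hF : F.IsHermitian) {γ : ℝ} (hγ : 0 ≤ γ)
    (hγF : γ * opNorm F ≤ 1) : ((1 : Matrix n n ℝ) - γ • F).PosSemidef := by
  rw [psd_iff']
  constructor
  · rw [herm_iff_sym]
    have := (herm_iff_sym F).mp hF
    simp [Matrix.transpose_smul, this]
  · intro x
    have h := dot_le_opNorm F x
    have hxx : 0 ≤ x ⬝ᵥ x := by
      rw [dotProduct]
      exact Finset.sum_nonneg fun i _ => mul_self_nonneg _
    rw [Matrix.sub_mulVec, dotProduct_sub, smul_mulVec, Matrix.one_mulVec,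
      dotProduct_smul]
    have h2 : γ * (x ⬝ᵥ F.mulVec x) ≤ γ * (opNorm F * (x ⬝ᵥ x)) :=
      mul_le_mul_of_nonneg_left h hγ
    rw [smul_eq_mul]
    nlinarith [mul_le_mul_of_nonneg_right hγF hxx]

lemma opNorm_pos [Nonempty n] (S : Matrix n n ℝ) (hS : S.PosDef) : 0 < opNorm S := by
  rw [opNorm, norm_pos_iff]
  intro hzero
  have h0 : Matrix.toEuclideanLin (𝕜 := ℝ) S = 0 := by
    apply LinearMap.ext
    intro v
    have := congrArg (fun f : EuclideanSpace ℝ n →L[ℝ] EuclideanSpace ℝ n => f v) hzero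
    simpa using this
  have hS0 : S = 0 := by
    have := congrArg (Matrix.toEuclideanLin (𝕜 := ℝ)).symm h0
    simpa using this
  have := hS.det_pos
  rw [hS0, Matrix.det_zero] at this
  exact lt_irrefl 0 this

lemma psd_smul {M : Matrix n n ℝ} (hM : M.PosSemidef) {c : ℝ} (hc : 0 ≤ c) :
    (c • M).PosSemidef := by
  rw [psd_iff'] at hM ⊢
  refine ⟨?_, fun x => ?_⟩
  · have ht : Mᵀ = M := by
      rw [← Matrix.conjTranspose_eq_transpose_of_trivial]; exact hM.1
    simp [Matrix.IsHermitian, Matrix.conjTranspose_eq_transpose_of_trivial,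
      Matrix.transpose_smul, ht]
  · rw [smul_mulVec, dotProduct_smul]
    exact mul_nonneg hc (hM.2 x)

lemma psd_tr_mul_self (G : Matrix m n ℝ) : (Gᵀ * G).PosSemidef := by
  have := Matrix.posSemidef_conjTranspose_mul_self G
  rwa [Matrix.conjTranspose_eq_transpose_of_trivial] at this

lemma psd_mul_self_tr (G : Matrix m n ℝ) : (G * Gᵀ).PosSemidef := by
  have := Matrix.posSemidef_self_mul_conjTranspose G
  rwa [Matrix.conjTranspose_eq_transpose_of_trivial] at this

lemma psd_conj {A : Matrix n n ℝ} (hA : A.PosSemidef) (G : Matrix n m ℝ) :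
    (Gᵀ * A * G).PosSemidef := by
  have := hA.conjTranspose_mul_mul_same G
  rwa [Matrix.conjTranspose_eq_transpose_of_trivial] at this

lemma trace_psd_nonneg {P : Matrix n n ℝ} (hP : P.PosSemidef) : 0 ≤ P.trace := by
  rw [Matrix.trace]
  apply Finset.sum_nonneg
  intro i _
  have := ((psd_iff' P).mp hP).2 (Pi.single i 1)
  simpa [Matrix.mulVec_single, single_dotProduct, Matrix.diag] using this

open scoped MatrixOrder in
lemma trace_mul_psd_nonneg {P C : Matrix n n ℝ} (hP : P.PosSemidef) (hC : C.PosSemidef) :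
    0 ≤ (P * C).trace := by
  have h1 : P * C = CFC.sqrt P * (CFC.sqrt P * C) := by rw [← mul_assoc, CFC.sqrt_mul_sqrt_self P (Matrix.nonneg_iff_posSemidef.mpr hP)]
  have h2 : (P * C).trace = (CFC.sqrt P * C * CFC.sqrt P).trace := by
    rw [h1, Matrix.trace_mul_comm, mul_assoc]
  rw [h2]
  have h3 : (CFC.sqrt P * C * CFC.sqrt P).PosSemidef := by
    have := hC.conjTranspose_mul_mul_same (CFC.sqrt P)
    rwa [(Matrix.nonneg_iff_posSemidef.mp (CFC.sqrt_nonneg P)).1.eq] at this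
  exact trace_psd_nonneg h3

lemma trace_mul_mono {X Y C : Matrix n n ℝ} (h : (Y - X).PosSemidef) (hC : C.PosSemidef) :
    (X * C).trace ≤ (Y * C).trace := by
  have := trace_mul_psd_nonneg h hC
  rw [Matrix.sub_mul, Matrix.trace_sub] at this
  linarith

lemma trace_lyap (M X N S P : Matrix n n ℝ) (hX : X = Mᵀ * X * M + N)
    (hS : S = P + M * S * Mᵀ) : (X * P).trace = (N * S).trace := by
  have hP : P = S - M * S * Mᵀ := eq_sub_of_add_eq hS.symm
  have h1 : (X * P).trace = (X * S).trace - (X * (M * S * Mᵀ)).trace := by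
    rw [hP, Matrix.mul_sub, Matrix.trace_sub]
  have h2 : (X * S).trace = (X * (M * S * Mᵀ)).trace + (N * S).trace := by
    conv_lhs => rw [hX]
    rw [Matrix.add_mul, Matrix.trace_add]
    congr 1
    calc (Mᵀ * X * M * S).trace = (Mᵀ * (X * M * S)).trace := by noncomm_ring
      _ = ((X * M * S) * Mᵀ).trace := Matrix.trace_mul_comm _ _
      _ = (X * (M * S * Mᵀ)).trace := by noncomm_ring
  rw [h1, h2]; ring

lemma split3 (M X Y : Matrix n n ℝ) : Mᵀ * X * M = Mᵀ * Y * M + Mᵀ * (X - Y) * M := by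
  rw [Matrix.mul_sub, Matrix.sub_mul]; abel

lemma bell_diff (A : Matrix n n ℝ) (B : Matrix n m ℝ) (K L : Matrix m n ℝ)
    (P Q : Matrix n n ℝ) (R : Matrix m m ℝ) (hPt : Pᵀ = P) (hRt : Rᵀ = R) :
    Q + Lᵀ * R * L + (A - B * L)ᵀ * P * (A - B * L)
      = Q + Kᵀ * R * K + (A - B * K)ᵀ * P * (A - B * K)
        + ((L - K)ᵀ * ((R + Bᵀ * P * B) * K - Bᵀ * P * A)
          + ((R + Bᵀ * P * B) * K - Bᵀ * P * A)ᵀ * (L - K)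
          + (L - K)ᵀ * (R + Bᵀ * P * B) * (L - K)) := by
  simp only [Matrix.transpose_sub, Matrix.transpose_mul, Matrix.transpose_add,
    Matrix.transpose_transpose, hPt, hRt]
  simp only [Matrix.sub_mul, Matrix.mul_sub, Matrix.add_mul, Matrix.mul_add]
  simp only [Matrix.mul_assoc]
  abel

end LQRAux

open LQRAux in
/-- one-step natural policy gradient contraction: with
`K' = K − γ E_K` and `γ ‖R + Bᵀ P_K B‖ ≤ 1`,
`J(K') − J(K*) ≤ (1 − γ σ_min(Ψ) σ_min(R) ‖Σ_{K*}‖⁻¹)(J(K) − J(K*))`,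
where `J(K) = tr(P_K Ψ_σ) + σ² tr(R)` and `K*` is optimal. -/
theorem lqr_natural_gradient_contraction
    (d k : ℕ) (A : Matrix (Fin d) (Fin d) ℝ) (B : Matrix (Fin d) (Fin k) ℝ)
    (K K' Kstar : Matrix (Fin k) (Fin d) ℝ) (σ γ : ℝ)
    (Q Ψ Ψσ PK PK' Pstar Sstar : Matrix (Fin d) (Fin d) ℝ)
    (R : Matrix (Fin k) (Fin k) ℝ)
    (hΨσ : Ψσ = Ψ + σ ^ 2 • (B * Bᵀ))
    (hQ : Q.PosDef) (hR : R.PosDef) (hΨ : Ψ.PosDef)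
    (EK : Matrix (Fin k) (Fin d) ℝ)
    (hEK : EK = (R + Bᵀ * PK * B) * K - Bᵀ * PK * A)
    (hγpos : 0 < γ) (hγ : γ * opNorm (R + Bᵀ * PK * B) ≤ 1)
    (hK' : K' = K - γ • EK)
    (hstab : specRad (A - B * K) < 1) (hstab' : specRad (A - B * K') < 1)
    (hstabstar : specRad (A - B * Kstar) < 1)
    (hPKpd : PK.PosDef) (hPK : PK = Q + Kᵀ * R * K + (A - B * K)ᵀ * PK * (A - B * K))
    (hPK'pd : PK'.PosDef)
    (hPK' : PK' = Q + K'ᵀ * R * K' + (A - B * K')ᵀ * PK' * (A - B * K'))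
    (hPstarpd : Pstar.PosDef)
    (hPstar : Pstar = Q + Kstarᵀ * R * Kstar + (A - B * Kstar)ᵀ * Pstar * (A - B * Kstar))
    (hSstarpd : Sstar.PosDef)
    (hSstar : Sstar = Ψσ + (A - B * Kstar) * Sstar * (A - B * Kstar)ᵀ)
    (hopt : ∀ (K'' : Matrix (Fin k) (Fin d) ℝ) (P'' : Matrix (Fin d) (Fin d) ℝ),
      specRad (A - B * K'') < 1 → P''.PosDef →
      P'' = Q + K''ᵀ * R * K'' + (A - B * K'')ᵀ * P'' * (A - B * K'') →
      (Pstar * Ψσ).trace + σ ^ 2 * R.trace ≤ (P'' * Ψσ).trace + σ ^ 2 * R.trace) :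
    ((PK' * Ψσ).trace + σ ^ 2 * R.trace) - ((Pstar * Ψσ).trace + σ ^ 2 * R.trace) ≤
      (1 - γ * minEig Ψ * minEig R * (opNorm Sstar)⁻¹) *
        (((PK * Ψσ).trace + σ ^ 2 * R.trace) - ((Pstar * Ψσ).trace + σ ^ 2 * R.trace)) := by
  rcases Nat.eq_zero_or_pos d with hd | hd
  · subst hd
    simp [Matrix.trace, Finset.univ_eq_empty]
  haveI : Nonempty (Fin d) := ⟨⟨0, hd⟩⟩
  -- symmetry facts
  have hPKt : PKᵀ = PK := (herm_iff_sym PK).mp hPKpd.isHermitian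
  have hPK't : PK'ᵀ = PK' := (herm_iff_sym PK').mp hPK'pd.isHermitian
  have hPstart : Pstarᵀ = Pstar := (herm_iff_sym Pstar).mp hPstarpd.isHermitian
  have hRt : Rᵀ = R := (herm_iff_sym R).mp hR.isHermitian
  have hFt : (R + Bᵀ * PK * B)ᵀ = R + Bᵀ * PK * B := by
    simp [Matrix.transpose_add, Matrix.transpose_mul, Matrix.transpose_transpose, hPKt, hRt,
      Matrix.mul_assoc]
  have hFherm : (R + Bᵀ * PK * B).IsHermitian := (herm_iff_sym _).mpr hFt
  -- Bellman difference identities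
  have hsplit : (A - B*K')ᵀ * PK' * (A - B*K')
      = (A - B*K')ᵀ * PK * (A - B*K') + (A - B*K')ᵀ * (PK' - PK) * (A - B*K') :=
    split3 (A - B*K') PK' PK
  have e2 := bell_diff A B K K' PK Q R hPKt hRt
  rw [← hEK, ← hPK] at e2
  have hX' : PK' - PK = (A - B*K')ᵀ * (PK' - PK) * (A - B*K')
      + ((K'-K)ᵀ * EK + EKᵀ * (K'-K) + (K'-K)ᵀ * (R + Bᵀ * PK * B) * (K'-K)) := by
    calc PK' - PK
        = Q + K'ᵀ*R*K' + (A - B*K')ᵀ * PK' * (A - B*K') - PK := by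
          conv_lhs => rw [hPK']
      _ = Q + K'ᵀ*R*K' + ((A - B*K')ᵀ * PK * (A - B*K')
            + (A - B*K')ᵀ * (PK' - PK) * (A - B*K')) - PK := by rw [hsplit]
      _ = (Q + K'ᵀ*R*K' + (A - B*K')ᵀ * PK * (A - B*K')) - PK
            + (A - B*K')ᵀ * (PK' - PK) * (A - B*K') := by abel
      _ = (PK + ((K'-K)ᵀ * EK + EKᵀ * (K'-K) + (K'-K)ᵀ * (R + Bᵀ * PK * B) * (K'-K))) - PK
            + (A - B*K')ᵀ * (PK' - PK) * (A - B*K') := by rw [e2]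
      _ = _ := by abel
  have hsplits : (A - B*Kstar)ᵀ * Pstar * (A - B*Kstar)
      = (A - B*Kstar)ᵀ * PK * (A - B*Kstar)
        + (A - B*Kstar)ᵀ * (Pstar - PK) * (A - B*Kstar) :=
    split3 (A - B*Kstar) Pstar PK
  have e3 := bell_diff A B K Kstar PK Q R hPKt hRt
  rw [← hEK, ← hPK] at e3
  have hXs : Pstar - PK = (A - B*Kstar)ᵀ * (Pstar - PK) * (A - B*Kstar)
      + ((Kstar-K)ᵀ * EK + EKᵀ * (Kstar-K)
        + (Kstar-K)ᵀ * (R + Bᵀ * PK * B) * (Kstar-K)) := by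
    calc Pstar - PK
        = Q + Kstarᵀ*R*Kstar + (A - B*Kstar)ᵀ * Pstar * (A - B*Kstar) - PK := by
          conv_lhs => rw [hPstar]
      _ = Q + Kstarᵀ*R*Kstar + ((A - B*Kstar)ᵀ * PK * (A - B*Kstar)
            + (A - B*Kstar)ᵀ * (Pstar - PK) * (A - B*Kstar)) - PK := by rw [hsplits]
      _ = (Q + Kstarᵀ*R*Kstar + (A - B*Kstar)ᵀ * PK * (A - B*Kstar)) - PK
            + (A - B*Kstar)ᵀ * (Pstar - PK) * (A - B*Kstar) := by abel
      _ = (PK + ((Kstar-K)ᵀ * EK + EKᵀ * (Kstar-K)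
            + (Kstar-K)ᵀ * (R + Bᵀ * PK * B) * (Kstar-K))) - PK
            + (A - B*Kstar)ᵀ * (Pstar - PK) * (A - B*Kstar) := by rw [e3]
      _ = _ := by abel
  -- Step A : rewrite K' - K
  have hKK : K' - K = (-γ) • EK := by rw [hK', neg_smul]; abel
  rw [hKK] at hX'
  have hN'id : (-γ) • (EKᵀ * EK)
      - (((-γ) • EK)ᵀ * EK + EKᵀ * ((-γ) • EK)
          + ((-γ) • EK)ᵀ * (R + Bᵀ * PK * B) * ((-γ) • EK))
      = γ • (EKᵀ * ((1 : Matrix (Fin k) (Fin k) ℝ) - γ • (R + Bᵀ * PK * B)) * EK) := by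
    simp only [neg_smul, Matrix.transpose_neg, Matrix.transpose_smul, Matrix.neg_mul,
      Matrix.mul_neg, Matrix.smul_mul, Matrix.mul_smul, Matrix.mul_sub, Matrix.sub_mul,
      Matrix.mul_one, Matrix.one_mul, smul_smul, neg_neg, smul_neg, Matrix.mul_assoc]
    module
  have hN'psd1 : ((-γ) • (EKᵀ * EK)
      - (((-γ) • EK)ᵀ * EK + EKᵀ * ((-γ) • EK)
          + ((-γ) • EK)ᵀ * (R + Bᵀ * PK * B) * ((-γ) • EK))).PosSemidef := by
    rw [hN'id]
    exact psd_smul (psd_conj (one_sub_smul_psd _ hFherm hγpos.le hγ) EK) hγpos.le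
  have hN'herm : (((-γ) • EK)ᵀ * EK + EKᵀ * ((-γ) • EK)
      + ((-γ) • EK)ᵀ * (R + Bᵀ * PK * B) * ((-γ) • EK)).IsHermitian := by
    rw [herm_iff_sym]
    simp only [Matrix.transpose_add, Matrix.transpose_mul, Matrix.transpose_smul,
      Matrix.transpose_transpose, hFt]
    simp only [Matrix.mul_assoc]
    abel
  have hX'herm : (PK' - PK).IsHermitian := by
    rw [herm_iff_sym]; simp [Matrix.transpose_sub, hPK't, hPKt]
  have hnegN' : (-(((-γ) • EK)ᵀ * EK + EKᵀ * ((-γ) • EK)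
      + ((-γ) • EK)ᵀ * (R + Bᵀ * PK * B) * ((-γ) • EK))).PosSemidef := by
    have hid2 : -(((-γ) • EK)ᵀ * EK + EKᵀ * ((-γ) • EK)
        + ((-γ) • EK)ᵀ * (R + Bᵀ * PK * B) * ((-γ) • EK))
        = ((-γ) • (EKᵀ * EK)
          - (((-γ) • EK)ᵀ * EK + EKᵀ * ((-γ) • EK)
            + ((-γ) • EK)ᵀ * (R + Bᵀ * PK * B) * ((-γ) • EK))) + γ • (EKᵀ * EK) := by
      module
    rw [hid2]
    exact hN'psd1.add (psd_smul (psd_tr_mul_self EK) hγpos.le)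
  have hlyap := lyap_psd (A - B*K') (PK' - PK) _ hX'herm hN'herm hX' hnegN' hstab'
  have hcomb : ((-γ) • (EKᵀ * EK) - (PK' - PK)).PosSemidef := by
    have h := hN'psd1.add hlyap
    rwa [sub_add_sub_cancel] at h
  have hΨσpsd : Ψσ.PosSemidef := by
    rw [hΨσ]; exact hΨ.posSemidef.add (psd_smul (psd_mul_self_tr B) (sq_nonneg σ))
  have htrA : ((PK' - PK) * Ψσ).trace ≤ ((-γ) • (EKᵀ * EK) * Ψσ).trace :=
    trace_mul_mono hcomb hΨσpsd
  rw [smul_mul_assoc, Matrix.trace_smul, smul_eq_mul, Matrix.sub_mul, Matrix.trace_sub] at htrA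
  have hΨσm : (Ψσ - minEig Ψ • 1).PosSemidef := by
    have hidm : Ψσ - minEig Ψ • 1 = (Ψ - minEig Ψ • 1) + σ^2 • (B * Bᵀ) := by
      rw [hΨσ]; abel
    rw [hidm]
    exact (sub_minEig_smul_psd Ψ hΨ.isHermitian).add (psd_smul (psd_mul_self_tr B) (sq_nonneg σ))
  have hlowtr : minEig Ψ * (EKᵀ * EK).trace ≤ ((EKᵀ * EK) * Ψσ).trace := by
    have h := trace_mul_mono hΨσm (psd_tr_mul_self EK)
    rw [smul_mul_assoc, Matrix.one_mul, Matrix.trace_smul, smul_eq_mul] at h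
    have h2 : ((EKᵀ * EK) * Ψσ).trace = (Ψσ * (EKᵀ * EK)).trace := Matrix.trace_mul_comm _ _
    rw [h2]
    exact h
  have hgA : γ * (minEig Ψ * (EKᵀ * EK).trace) ≤ γ * ((EKᵀ * EK) * Ψσ).trace :=
    mul_le_mul_of_nonneg_left hlowtr hγpos.le
  -- Step B
  have htb : ((Pstar - PK) * Ψσ).trace
      = (((Kstar-K)ᵀ * EK + EKᵀ * (Kstar-K)
        + (Kstar-K)ᵀ * (R + Bᵀ * PK * B) * (Kstar-K)) * Sstar).trace :=
    trace_lyap (A - B*Kstar) (Pstar - PK) _ Sstar Ψσ hXs hSstar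
  have hrpack : 0 ≤ minEig R ∧ (R - minEig R • 1).PosSemidef := by
    rcases isEmpty_or_nonempty (Fin k) with hk | hk
    · have h0 : minEig R = 0 := minEig_empty R
      refine ⟨le_of_eq h0.symm, ?_⟩
      rw [h0]
      simpa using hR.posSemidef
    · exact ⟨(minEig_pos R hR).le, sub_minEig_smul_psd R hR.isHermitian⟩
  have hFsub : ((R + Bᵀ * PK * B) - minEig R • 1).PosSemidef := by
    have hidf : (R + Bᵀ * PK * B) - minEig R • 1 = (R - minEig R • 1) + Bᵀ * PK * B := by abel
    rw [hidf]
    exact hrpack.2.add (psd_conj hPKpd.posSemidef B)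
  have hNsid : minEig R • ((Kstar-K)ᵀ * EK + EKᵀ * (Kstar-K)
        + (Kstar-K)ᵀ * (R + Bᵀ * PK * B) * (Kstar-K)) + EKᵀ * EK
      = (minEig R • (Kstar-K) + EK)ᵀ * (minEig R • (Kstar-K) + EK)
        + minEig R • ((Kstar-K)ᵀ * ((R + Bᵀ * PK * B) - minEig R • 1) * (Kstar-K)) := by
    simp only [Matrix.transpose_add, Matrix.transpose_smul, Matrix.add_mul, Matrix.mul_add,
      Matrix.sub_mul, Matrix.mul_sub, Matrix.smul_mul, Matrix.mul_smul, Matrix.mul_one,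
      Matrix.one_mul, smul_smul, Matrix.mul_assoc]
    module
  have hNspsd : (minEig R • ((Kstar-K)ᵀ * EK + EKᵀ * (Kstar-K)
        + (Kstar-K)ᵀ * (R + Bᵀ * PK * B) * (Kstar-K)) + EKᵀ * EK).PosSemidef := by
    rw [hNsid]
    exact (psd_tr_mul_self _).add (psd_smul (psd_conj hFsub _) hrpack.1)
  have htr0 := trace_mul_psd_nonneg hNspsd hSstarpd.posSemidef
  rw [Matrix.add_mul, Matrix.trace_add, smul_mul_assoc, Matrix.trace_smul, smul_eq_mul] at htr0
  have hSup : ((EKᵀ * EK) * Sstar).trace ≤ opNorm Sstar * (EKᵀ * EK).trace := by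
    have h := trace_mul_mono (opNorm_smul_one_sub_psd Sstar hSstarpd.posSemidef)
      (psd_tr_mul_self EK)
    rw [smul_mul_assoc, Matrix.one_mul, Matrix.trace_smul, smul_eq_mul] at h
    calc ((EKᵀ * EK) * Sstar).trace = (Sstar * (EKᵀ * EK)).trace := Matrix.trace_mul_comm _ _
      _ ≤ opNorm Sstar * (EKᵀ * EK).trace := h
  have hbtrace : (PK * Ψσ).trace - (Pstar * Ψσ).trace
      = -((((Kstar-K)ᵀ * EK + EKᵀ * (Kstar-K)
        + (Kstar-K)ᵀ * (R + Bᵀ * PK * B) * (Kstar-K)) * Sstar).trace) := by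
    rw [← htb, Matrix.sub_mul, Matrix.trace_sub]; ring
  -- combine
  have hs : 0 < opNorm Sstar := opNorm_pos Sstar hSstarpd
  have hm : 0 < minEig Ψ := minEig_pos Ψ hΨ
  have hrb : minEig R * ((PK * Ψσ).trace - (Pstar * Ψσ).trace)
      ≤ opNorm Sstar * (EKᵀ * EK).trace := by
    rw [hbtrace]
    linarith [htr0, hSup]
  have h5 : minEig R * ((PK * Ψσ).trace - (Pstar * Ψσ).trace) * (opNorm Sstar)⁻¹
      ≤ (EKᵀ * EK).trace := by
    rw [← div_eq_mul_inv, div_le_iff₀ hs]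
    linarith [hrb]
  have h6 : γ * minEig Ψ * (minEig R * ((PK * Ψσ).trace - (Pstar * Ψσ).trace)
      * (opNorm Sstar)⁻¹) ≤ γ * minEig Ψ * (EKᵀ * EK).trace :=
    mul_le_mul_of_nonneg_left h5 (by positivity)
  have hgoal_eq : (1 - γ * minEig Ψ * minEig R * (opNorm Sstar)⁻¹) *
      (((PK * Ψσ).trace + σ ^ 2 * R.trace) - ((Pstar * Ψσ).trace + σ ^ 2 * R.trace))
      = ((PK * Ψσ).trace - (Pstar * Ψσ).trace)
        - γ * minEig Ψ * (minEig R * ((PK * Ψσ).trace - (Pstar * Ψσ).trace)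
            * (opNorm Sstar)⁻¹) := by ring
  rw [hgoal_eq]
  linarith [htrA, hgA, h6]
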